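/- Let X be a process on Ω with time set T (ℕ or [0,∞)) and values in (E, ℰ), and S a stopping time of the natural filtration F^X. If the range of the stopped process satisfies Im X^S ⊆ Im X (as subsets of E^T), then F^X_S ⊆ σ(X^S). -/

import Mathlib

open MeasureTheory Set

variable {Ω E T : Type*}

/-- The natural filtration of a process `X : T → Ω → E`. -/
def natFilt [LinearOrder T] [mE : MeasurableSpace E] (X : T → Ω → E) (t : T) :
    MeasurableSpace Ω :=
  ⨆ s, ⨆ _ : s ≤ t, mE.comap (X s)

/-- The process `X` stopped at the random time `S : Ω → T ∪ {∞}`. -/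
def stopped [LinearOrder T] (X : T → Ω → E) (S : Ω → WithTop T) (t : T) (ω : Ω) : E :=
  X (min t ((S ω).untopD t)) ω

/-- Sets in `F^X_t` are invariant under equality of paths up to time `t`. -/
lemma natFilt_invariant [LinearOrder T] [mE : MeasurableSpace E] (X : T → Ω → E) (t : T)
    {A : Set Ω} (hA : MeasurableSet[natFilt X t] A) {ω ω' : Ω}
    (h : ∀ s ≤ t, X s ω = X s ω') : ω ∈ A ↔ ω' ∈ A := by
  let m' : MeasurableSpace Ω :=
    { MeasurableSet' := fun A => ∀ ω ω', (∀ s ≤ t, X s ω = X s ω') → (ω ∈ A ↔ ω' ∈ A)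
      measurableSet_empty := by simp
      measurableSet_compl := fun A hA ω ω' h => by
        simp only [Set.mem_compl_iff, hA ω ω' h]
      measurableSet_iUnion := fun f hf ω ω' h => by
        simp only [Set.mem_iUnion, fun n => hf n ω ω' h] }
  have hle : natFilt X t ≤ m' := by
    refine iSup_le fun s => iSup_le fun hs => ?_
    rintro A ⟨B, hB, rfl⟩
    intro ω ω' h
    simp [Set.mem_preimage, h s hs]
  exact hle A hA ω ω' h

/-- Sets in `F^X_∞` are invariant under equality of paths. -/
lemma iSup_natFilt_invariant [LinearOrder T] [mE : MeasurableSpace E] (X : T → Ω → E)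
    {A : Set Ω} (hA : MeasurableSet[⨆ t, natFilt X t] A) {ω ω' : Ω}
    (h : ∀ s, X s ω = X s ω') : ω ∈ A ↔ ω' ∈ A := by
  let m' : MeasurableSpace Ω :=
    { MeasurableSet' := fun A => ∀ ω ω', (∀ s, X s ω = X s ω') → (ω ∈ A ↔ ω' ∈ A)
      measurableSet_empty := by simp
      measurableSet_compl := fun A hA ω ω' h => by
        simp only [Set.mem_compl_iff, hA ω ω' h]
      measurableSet_iUnion := fun f hf ω ω' h => by
        simp only [Set.mem_iUnion, fun n => hf n ω ω' h] }
  have hle : (⨆ t, natFilt X t) ≤ m' := by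
    refine iSup_le fun t A hA ω ω' h => ?_
    exact natFilt_invariant X t hA fun s _ => h s
  exact hle A hA ω ω' h

/-- If `X` is a process with time set `T` (`ℕ` or `[0,∞)`), `S` a stopping time of its
natural filtration, and the range of the stopped process is contained in the range of the
process (as maps `Ω → E^T`), then `F^X_S ⊆ σ(X^S)`. -/
theorem stmt_3 [LinearOrder T] [MeasurableSpace E]
    (hT : Nonempty (T ≃o ℕ) ∨ Nonempty (T ≃o NNReal))
    (X : T → Ω → E) (S : Ω → WithTop T)
    (hS : ∀ t : T, MeasurableSet[natFilt X t] {ω | S ω ≤ (t : WithTop T)})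
    (hIm : Set.range (fun ω (t : T) => stopped X S t ω) ⊆ Set.range (fun ω (t : T) => X t ω)) :
    ∀ A : Set Ω,
      (MeasurableSet[⨆ t, natFilt X t] A ∧
          ∀ t : T, MeasurableSet[natFilt X t] (A ∩ {ω | S ω ≤ (t : WithTop T)})) →
        MeasurableSet[MeasurableSpace.comap (fun ω (t : T) => stopped X S t ω)
          MeasurableSpace.pi] A := by
  rintro A ⟨hA, hAS⟩
  -- `F^X_∞ ≤ σ(X)` as a comap of the full-path map
  have hΨ : MeasurableSet[MeasurableSpace.comap (fun ω (t : T) => X t ω)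
      MeasurableSpace.pi] A := by
    have hle : (⨆ t, natFilt X t) ≤
        MeasurableSpace.comap (fun ω (t : T) => X t ω) MeasurableSpace.pi := by
      refine iSup_le fun t => iSup_le fun s => iSup_le fun _ => ?_
      rintro C ⟨B, hB, rfl⟩
      exact ⟨(fun p : T → E => p s) ⁻¹' B, (measurable_pi_apply s) hB, rfl⟩
    exact hle A hA
  obtain ⟨B, hB, hAB⟩ := hΨ
  refine ⟨B, hB, ?_⟩
  ext ω
  obtain ⟨ω', hω'⟩ := hIm ⟨ω, rfl⟩
  have hX : ∀ t, X t ω' = stopped X S t ω := fun t => congrFun hω' t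
  have key : ω' ∈ A ↔ ω ∈ A := by
    cases hSω : S ω with
    | top =>
        have heq : ∀ s, X s ω' = X s ω := fun s => by
          simpa [stopped, hSω] using hX s
        exact iSup_natFilt_invariant X hA heq
    | coe s =>
        have heq : ∀ u ≤ s, X u ω' = X u ω := fun u hu => by
          simpa [stopped, hSω, min_eq_left hu] using hX u
        have hωs : ω ∈ {ω | S ω ≤ (s : WithTop T)} := by simp [hSω]
        have hω's : S ω' ≤ (s : WithTop T) :=
          (natFilt_invariant X s (hS s) heq).mpr hωs
        obtain ⟨u, hSω', hus⟩ := WithTop.le_coe_iff.mp hω's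
        have hequ : ∀ v ≤ u, X v ω' = X v ω := fun v hv => heq v (hv.trans hus)
        have hω'u : ω' ∈ {ω | S ω ≤ (u : WithTop T)} := by simp [hSω', le_refl]
        have hωu : ω ∈ {ω | S ω ≤ (u : WithTop T)} :=
          (natFilt_invariant X u (hS u) hequ).mp hω'u
        have hsu : s ≤ u := by
          have : (s : WithTop T) ≤ (u : WithTop T) := by
            simpa [hSω] using hωu
          exact_mod_cast this
        have hus' : u = s := le_antisymm hus hsu
        have hSω'' : S ω' = (s : WithTop T) := by rw [hSω', hus']
        have := natFilt_invariant X s (hAS s) heq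
        constructor
        · intro h
          exact ((this.mp ⟨h, by simp [hSω'']⟩).1)
        · intro h
          exact ((this.mpr ⟨h, hωs⟩).1)
  calc ω ∈ (fun ω (t : T) => stopped X S t ω) ⁻¹' B
      ↔ (fun t : T => X t ω') ∈ B := by
        simp only [Set.mem_preimage]
        exact iff_of_eq (congrArg (· ∈ B) (funext fun t => (hX t).symm))
    _ ↔ ω' ∈ A := by rw [← hAB]; rfl
    _ ↔ ω ∈ A := key
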